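/- Let H = W ≀ P be a wreath product over a finite index set I, and let α ∈ H be such that for every index i, the cycle length ℓ_i(α̂) is coprime to the order of the cycle-product π_i(α). Then α is conjugate in H to an element γ with γ̂ = α̂ that is in standard form (γ_{i·γ̂} = γ_i for all i), with π_i(γ) conjugate to π_i(α) for all i, and such that π_i(γ) = 1 iff γ_i = 1. -/

import Mathlib

/-- The wreath product `W ≀ P` over an index set `I` on which `P` acts: underlying set
`(I → W) × P`, with multiplication `(αβ)_i = α_i · β_{i·α̂}` (indices permuted on the
right, so underlying elements of `P` compose left-to-right). -/
def Wreath (W P I : Type*) : Type _ := (I → W) × P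

namespace Wreath

variable {W P I : Type*} [Group W] [Group P] [MulAction P I]

instance : Group (Wreath W P I) where
  mul α β := (fun i => α.1 i * β.1 (α.2 • i), β.2 * α.2)
  one := (fun _ => 1, 1)
  inv α := (fun i => (α.1 (α.2⁻¹ • i))⁻¹, α.2⁻¹)
  mul_assoc a b c := Prod.ext (funext fun i => by
      show (a.1 i * b.1 (a.2 • i)) * c.1 ((b.2 * a.2) • i)
        = a.1 i * (b.1 (a.2 • i) * c.1 (b.2 • a.2 • i))
      rw [mul_smul, mul_assoc]) (mul_assoc _ _ _).symm
  one_mul a := Prod.ext (funext fun i => by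
      show 1 * a.1 ((1 : P) • i) = a.1 i
      rw [one_smul, one_mul]) (mul_one _)
  mul_one a := Prod.ext (funext fun i => by
      show a.1 i * 1 = a.1 i
      rw [mul_one]) (one_mul _)
  inv_mul_cancel a := Prod.ext (funext fun i => by
      show (a.1 (a.2⁻¹ • i))⁻¹ * a.1 (a.2⁻¹ • i) = 1
      rw [inv_mul_cancel]) (mul_inv_cancel _)

/-- The components `α_i ∈ W` of an element of the wreath product. -/
def fn (α : Wreath W P I) : I → W := α.1

/-- The underlying element `α̂ ∈ P` of an element of the wreath product. -/
def pm (α : Wreath W P I) : P := α.2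

@[simp] lemma fn_mul (α β : Wreath W P I) (i : I) :
    (α * β).fn i = α.fn i * β.fn (α.pm • i) := rfl

@[simp] lemma pm_mul (α β : Wreath W P I) : (α * β).pm = β.pm * α.pm := rfl

/-- The length `ℓ_i(α̂)` of the cycle of `α̂` containing `i`. -/
noncomputable def cycleLen (α : Wreath W P I) (i : I) : ℕ :=
  Function.minimalPeriod (α.pm • ·) i

/-- The cycle-product `π_i(α) = α_i · α_{i·α̂} · α_{i·α̂²} ⋯ α_{i·α̂^{ℓ-1}}`. -/
noncomputable def cycleProd (α : Wreath W P I) (i : I) : W :=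
  ((List.range (α.cycleLen i)).map (fun k => α.fn (α.pm ^ k • i))).prod

end Wreath


namespace Wreath

variable {W P I : Type*} [Group W] [Group P] [MulAction P I]

@[simp] lemma pm_inv (α : Wreath W P I) : (α⁻¹).pm = α.pm⁻¹ := rfl

@[simp] lemma fn_inv (α : Wreath W P I) (i : I) :
    (α⁻¹).fn i = (α.fn (α.pm⁻¹ • i))⁻¹ := rfl

end Wreath

private lemma wreath_prod_telescope {W : Type*} [Group W] (u v : ℕ → W) : ∀ n : ℕ,
    ((List.range n).map (fun k => v k * u k * (v (k+1))⁻¹)).prod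
      = v 0 * ((List.range n).map u).prod * (v n)⁻¹
  | 0 => by simp
  | n+1 => by
    rw [List.range_succ, List.map_append, List.prod_append, wreath_prod_telescope u v n,
      List.map_append, List.prod_append]
    simp only [List.map_cons, List.map_nil, List.prod_cons, List.prod_nil]
    group

private lemma wreath_exists_pow_root {W : Type*} [Group W] (x : W) (l : ℕ)
    (h : Nat.Coprime l (orderOf x)) : ∃ m : ℕ, (x ^ m) ^ l = x := by
  by_cases h0 : orderOf x = 0
  · have hl : l = 1 := by simpa [h0, Nat.coprime_zero_right] using h
    exact ⟨1, by simp [hl]⟩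
  by_cases h1 : orderOf x = 1
  · have hx : x = 1 := orderOf_eq_one_iff.mp h1
    exact ⟨0, by simp [hx]⟩
  obtain ⟨m, -, hm⟩ := Nat.exists_mul_mod_eq_one_of_coprime h (by omega)
  refine ⟨m, ?_⟩
  rw [← pow_mul, ← pow_mod_orderOf, Nat.mul_comm m l, hm, pow_one]

private lemma wreath_group_cancel {G : Type*} [Group G] (a z : G) (k l : ℕ) :
    (a⁻¹) ^ (l + k) * (a ^ l * z) = (a⁻¹) ^ k * z := by group

theorem conj_to_reduced_standard_form {W P I : Type*} [Group W] [Group P] [MulAction P I]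
    [Fintype I] (α : Wreath W P I)
    (hco : ∀ i : I, Nat.Coprime (α.cycleLen i) (orderOf (α.cycleProd i))) :
    ∃ γ : Wreath W P I, IsConj α γ ∧ γ.pm = α.pm ∧
      (∀ i : I, γ.fn (γ.pm • i) = γ.fn i) ∧
      (∀ i : I, IsConj (γ.cycleProd i) (α.cycleProd i)) ∧
      (∀ i : I, γ.cycleProd i = 1 ↔ γ.fn i = 1) := by
  classical
  set σ := α.pm with hσ
  -- a global period N for the action of σ on I
  set N := orderOf (MulAction.toPermHom P I σ) with hNdef
  have hNpos : 0 < N := orderOf_pos _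
  have hNone : ∀ x : I, σ ^ N • x = x := by
    intro x
    have h1 : (MulAction.toPermHom P I σ) ^ N = 1 := pow_orderOf_eq_one _
    have h2 : (MulAction.toPermHom P I (σ ^ N)) x = ((MulAction.toPermHom P I σ) ^ N) x := by
      rw [map_pow]
    rw [h1] at h2
    simpa using h2
  have hNmul : ∀ (k : ℕ) (x : I), σ ^ (N * k) • x = x := by
    intro k
    induction k with
    | zero => intro x; simp
    | succ k ih =>
      intro x
      rw [Nat.mul_succ, pow_add, mul_smul, hNone x]
      exact ih x
  have hit : ∀ (k : ℕ) (x : I), (σ • · : I → I)^[k] x = σ ^ k • x := by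
    intro k x; rw [smul_iterate]
  have hper : ∀ i : I, i ∈ Function.periodicPts (σ • · : I → I) :=
    fun i => Function.mk_mem_periodicPts hNpos (by
      show (σ • · : I → I)^[N] i = i
      rw [hit]; exact hNone i)
  have hlen : ∀ i : I, α.cycleLen i = Function.minimalPeriod (σ • · : I → I) i :=
    fun i => rfl
  have hℓpos : ∀ i : I, 0 < α.cycleLen i := fun i => by
    rw [hlen]; exact Function.minimalPeriod_pos_of_mem_periodicPts (hper i)
  have hcyc : ∀ i : I, σ ^ (α.cycleLen i) • i = i := by
    intro i
    have := Function.iterate_minimalPeriod (f := (σ • · : I → I)) (x := i)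
    rw [hit] at this
    rw [hlen]; exact this
  have hℓshift : ∀ (i : I) (k : ℕ), α.cycleLen (σ ^ k • i) = α.cycleLen i := by
    intro i k
    have := Function.minimalPeriod_apply_iterate (hper i) k
    rw [hit] at this
    rw [hlen, hlen]; exact this
  -- the orbit equivalence relation and a choice of representatives
  have htrans : ∀ {i j k : I}, (∃ n : ℕ, σ ^ n • i = j) → (∃ n : ℕ, σ ^ n • j = k) →
      ∃ n : ℕ, σ ^ n • i = k := by
    rintro i j k ⟨a, rfl⟩ ⟨b, rfl⟩
    exact ⟨b + a, by rw [pow_add, mul_smul]⟩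
  have hsymm : ∀ {i j : I}, (∃ n : ℕ, σ ^ n • i = j) → ∃ n : ℕ, σ ^ n • j = i := by
    rintro i j ⟨a, rfl⟩
    refine ⟨a * (N - 1), ?_⟩
    have h1 : σ ^ (a * (N - 1)) • σ ^ a • i = σ ^ (a * (N - 1) + a) • i := by
      rw [pow_add, mul_smul]
    have h2 : a * (N - 1) + a = N * a := by
      obtain ⟨n, hn⟩ : ∃ n, N = n + 1 := ⟨N - 1, by omega⟩
      rw [hn]
      simp only [Nat.add_sub_cancel]
      ring
    rw [h1, h2]
    exact hNmul a i
  let s : Setoid I := ⟨fun i j => ∃ n : ℕ, σ ^ n • i = j,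
    ⟨fun i => ⟨0, by simp⟩, hsymm, htrans⟩⟩
  let rep : I → I := fun i => (Quotient.mk s i).out
  have hrep : ∀ i : I, ∃ n : ℕ, σ ^ n • rep i = i := fun i => Quotient.mk_out (s := s) i
  have hrepeq : ∀ i j : I, (∃ n : ℕ, σ ^ n • i = j) → rep i = rep j := by
    intro i j h
    show (Quotient.mk s i).out = (Quotient.mk s j).out
    congr 1
    exact Quotient.sound h
  have hrep_smul : ∀ (i : I) (k : ℕ), rep (σ ^ k • i) = rep i :=
    fun i k => (hrepeq i (σ ^ k • i) ⟨k, rfl⟩).symm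
  have hrep1 : ∀ i : I, rep (σ • i) = rep i := by
    intro i
    have := hrep_smul i 1
    rwa [pow_one] at this
  -- the ℓ-th root ρ of the cycle product at each point
  have hrootex : ∀ j : I, ∃ m : ℕ, ((α.cycleProd j) ^ m) ^ (α.cycleLen j) = α.cycleProd j :=
    fun j => wreath_exists_pow_root _ _ (hco j)
  let m : I → ℕ := fun j => (hrootex j).choose
  let ρ : I → W := fun j => (α.cycleProd j) ^ m j
  have hρdef : ∀ j : I, ρ j = (α.cycleProd j) ^ m j := fun j => rfl
  have hρ : ∀ j : I, (ρ j) ^ (α.cycleLen j) = α.cycleProd j := fun j => (hrootex j).choose_spec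
  -- partial products of α along the cycle
  let pp : I → ℕ → W := fun j k => ((List.range k).map (fun t => α.fn (σ ^ t • j))).prod
  have hpp : ∀ (j : I) (k : ℕ), pp j k = ((List.range k).map (fun t => α.fn (σ ^ t • j))).prod :=
    fun j k => rfl
  have hpp_succ : ∀ (j : I) (k : ℕ), pp j (k + 1) = pp j k * α.fn (σ ^ k • j) := by
    intro j k
    rw [hpp, hpp, List.range_succ, List.map_append, List.prod_append]
    simp
  have hpp_cycle : ∀ j : I, pp j (α.cycleLen j) = α.cycleProd j := fun j => rfl
  let val : I → ℕ → W := fun j k => ((ρ j)⁻¹) ^ k * pp j k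
  have hvaldef : ∀ (j : I) (k : ℕ), val j k = ((ρ j)⁻¹) ^ k * pp j k := fun j k => rfl
  have hval_succ : ∀ (j : I) (k : ℕ), val j (k + 1) = (ρ j)⁻¹ * val j k * α.fn (σ ^ k • j) := by
    intro j k
    rw [hvaldef, hvaldef, hpp_succ, pow_succ']
    simp [mul_assoc]
  have hval_per : ∀ (j : I) (k : ℕ), val j (α.cycleLen j + k) = val j k := by
    intro j k
    have h1 : pp j (α.cycleLen j + k) = α.cycleProd j * pp j k := by
      have hs : ∀ t : ℕ, σ ^ (α.cycleLen j + t) • j = σ ^ t • j := by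
        intro t; rw [Nat.add_comm, pow_add, mul_smul, hcyc j]
      rw [hpp, List.range_add, List.map_append, List.prod_append, List.map_map]
      congr 1
      rw [hpp]
      congr 1
      apply List.map_congr_left
      intro t _
      show α.fn (σ ^ (α.cycleLen j + t) • j) = α.fn (σ ^ t • j)
      rw [hs t]
    rw [hvaldef, hvaldef, h1, ← hρ j]
    exact wreath_group_cancel (ρ j) (pp j k) k (α.cycleLen j)
  have hval_add_mul : ∀ (j : I) (k q : ℕ), val j (k + α.cycleLen j * q) = val j k := by
    intro j k q
    induction q with
    | zero => simp
    | succ q ih =>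
      rw [show k + α.cycleLen j * (q + 1) = α.cycleLen j + (k + α.cycleLen j * q) from by ring,
        hval_per, ih]
  have hval_mod : ∀ (j : I) (k : ℕ), val j k = val j (k % α.cycleLen j) := by
    intro j k
    have := hval_add_mul j (k % α.cycleLen j) (k / α.cycleLen j)
    rw [Nat.mod_add_div] at this
    exact this
  have hval_eq : ∀ (j : I) (k k' : ℕ), σ ^ k • j = σ ^ k' • j → val j k = val j k' := by
    intro j k k' h
    have hm : k % α.cycleLen j = k' % α.cycleLen j := by
      have h1 : (σ • · : I → I)^[k % Function.minimalPeriod (σ • · : I → I) j] j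
          = (σ • · : I → I)^[k' % Function.minimalPeriod (σ • · : I → I) j] j := by
        rw [Function.iterate_mod_minimalPeriod_eq, Function.iterate_mod_minimalPeriod_eq,
          hit, hit]
        exact h
      have h2 := Function.iterate_injOn_Iio_minimalPeriod
        (f := (σ • · : I → I)) (x := j)
        (Set.mem_Iio.mpr (Nat.mod_lt _ (by rw [← hlen]; exact hℓpos j)))
        (Set.mem_Iio.mpr (Nat.mod_lt _ (by rw [← hlen]; exact hℓpos j))) h1
      rw [hlen]; exact h2
    rw [hval_mod, hm, ← hval_mod]
  -- the conjugating element
  let K : I → ℕ := fun i => (hrep i).choose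
  have hK : ∀ i : I, σ ^ K i • rep i = i := fun i => (hrep i).choose_spec
  let d : I → W := fun i => val (rep i) (K i)
  have hddef : ∀ i : I, d i = val (rep i) (K i) := fun i => rfl
  have hd_rec : ∀ i : I, d (σ • i) = (ρ (rep i))⁻¹ * d i * α.fn i := by
    intro i
    have h1 : σ ^ (K (σ • i)) • rep i = σ ^ (K i + 1) • rep i := by
      rw [pow_succ', mul_smul, hK i]
      have := hK (σ • i)
      rwa [hrep1 i] at this
    have h2 : d (σ • i) = val (rep i) (K (σ • i)) := by rw [hddef, hrep1 i]
    rw [h2, hval_eq (rep i) _ _ h1, hval_succ, hK i, hddef]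
  let δ : Wreath W P I := (d, (1 : P))
  have hδpm : δ.pm = 1 := rfl
  have hδfn : ∀ i : I, δ.fn i = d i := fun _ => rfl
  set γ : Wreath W P I := δ * α * δ⁻¹ with hγ
  have hγpm : γ.pm = σ := by
    rw [hγ, Wreath.pm_mul, Wreath.pm_mul, Wreath.pm_inv, hδpm, hσ]
    simp
  have hγfn : ∀ i : I, γ.fn i = d i * α.fn i * (d (σ • i))⁻¹ := by
    intro i
    rw [hγ, Wreath.fn_mul, Wreath.fn_mul, Wreath.fn_inv, Wreath.pm_mul, hδpm]
    simp [hδfn, hσ]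
  have hconst : ∀ i : I, γ.fn i = ρ (rep i) := by
    intro i
    rw [hγfn i, hd_rec i]
    group
  have hγlen : ∀ i : I, γ.cycleLen i = α.cycleLen i := by
    intro i
    show Function.minimalPeriod (γ.pm • ·) i = _
    rw [hγpm, hlen]
  have hγprod : ∀ i : I,
      γ.cycleProd i = ((List.range (α.cycleLen i)).map (fun k => γ.fn (σ ^ k • i))).prod := by
    intro i
    show ((List.range (γ.cycleLen i)).map (fun k => γ.fn (γ.pm ^ k • i))).prod = _
    rw [hγlen, hγpm]
  have hlenrep : ∀ i : I, α.cycleLen i = α.cycleLen (rep i) := by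
    intro i
    obtain ⟨k, hk⟩ := hrep i
    have := hℓshift (rep i) k
    rw [hk] at this
    exact this
  have hγprodA : ∀ i : I, γ.cycleProd i = α.cycleProd (rep i) := by
    intro i
    rw [hγprod i]
    have hc : ∀ k ∈ List.range (α.cycleLen i),
        γ.fn (σ ^ k • i) = ρ (rep i) := by
      intro k _
      rw [hconst, hrep_smul]
    rw [List.prod_eq_pow_card _ _ (by
      intro x hx
      obtain ⟨k, hk, rfl⟩ := List.mem_map.mp hx
      exact hc k hk)]
    rw [List.length_map, List.length_range, hlenrep i, hρ]
  have hγprodB : ∀ i : I, γ.cycleProd i = d i * α.cycleProd i * (d i)⁻¹ := by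
    intro i
    rw [hγprod i]
    have hc : ∀ k ∈ List.range (α.cycleLen i),
        γ.fn (σ ^ k • i) = (fun t => d (σ ^ t • i)) k * (fun t => α.fn (σ ^ t • i)) k
          * ((fun t => d (σ ^ t • i)) (k + 1))⁻¹ := by
      intro k _
      rw [hγfn]
      show _ = d (σ ^ k • i) * α.fn (σ ^ k • i) * (d (σ ^ (k + 1) • i))⁻¹
      rw [show σ ^ (k + 1) • i = σ • σ ^ k • i from by rw [pow_succ', mul_smul]]
    rw [List.map_congr_left hc, wreath_prod_telescope]
    rw [pow_zero, one_smul, hcyc i]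
    rfl
  refine ⟨γ, isConj_iff.mpr ⟨δ, hγ.symm⟩, by rw [hγpm, hσ], ?_, ?_, ?_⟩
  · intro i
    rw [hγpm, hconst, hconst, hrep1 i]
  · intro i
    refine isConj_iff.mpr ⟨(d i)⁻¹, ?_⟩
    rw [hγprodB i]
    group
  · intro i
    constructor
    · intro h
      have hπ : α.cycleProd (rep i) = 1 := by rw [← hγprodA i]; exact h
      rw [hconst i, hρdef, hπ, one_pow]
    · intro h
      rw [hconst i] at h
      rw [hγprodA i, ← hρ (rep i), h, one_pow]
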